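/- Let V be a normed space and δu : [t₀, ∞) → V be differentiable with ‖(d/dt)δu(t)‖-growth controlled by [δu(t), (d/dt)δu(t)] ≤ λ(t)·‖δu(t)‖² for an integrable function λ. Then ‖δu(t)‖ ≤ exp(∫_{t₀}^t λ(s) ds) · ‖δu(t₀)‖ for all t ≥ t₀. -/

import Mathlib

open Filter MeasureTheory Set

/-- If `δu` has derivative `δu' s` at `s` and the right slope of
`h ↦ ‖δu s + h • δu' s‖` tends to `L`, then `‖δu ·‖` has right derivative `L` at `s`. -/
lemma norm_hasDerivWithinAt_of_sip {V : Type*} [NormedAddCommGroup V] [NormedSpace ℝ V]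
    {δu : ℝ → V} {v : V} {s : ℝ} (h : HasDerivAt δu v s) {L : ℝ}
    (hL : Tendsto (fun h : ℝ => (‖δu s + h • v‖ - ‖δu s‖) / h)
      (nhdsWithin 0 (Set.Ioi 0)) (nhds L)) :
    HasDerivWithinAt (fun z => ‖δu z‖) L (Ioi s) s := by
  rw [hasDerivWithinAt_iff_tendsto_slope' (notMem_Ioi.2 le_rfl)]
  have hsub : Tendsto (fun z => z - s) (nhdsWithin s (Ioi s)) (nhdsWithin 0 (Ioi 0)) := by
    apply tendsto_nhdsWithin_of_tendsto_nhds_of_eventually_within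
    · have : Tendsto (fun z : ℝ => z - s) (nhds s) (nhds (s - s)) :=
        (continuous_id.sub continuous_const).tendsto s
      exact (by simpa using this : Tendsto (fun z : ℝ => z - s) (nhds s) (nhds 0)).mono_left nhdsWithin_le_nhds
    · filter_upwards [self_mem_nhdsWithin] with z hz
      simpa using sub_pos.2 (mem_Ioi.1 hz)
  have hA : Tendsto (fun z => (‖δu s + (z - s) • v‖ - ‖δu s‖) / (z - s))
      (nhdsWithin s (Ioi s)) (nhds L) := hL.comp hsub
  -- the vector slope tends to `v`
  have hV : Tendsto (fun z => ‖(z - s)⁻¹ • (δu z - δu s) - v‖) (nhdsWithin s (Ioi s)) (nhds 0) := by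
    have h1 : Tendsto (slope δu s) (nhdsWithin s (Ioi s)) (nhds v) := by
      have := (h.hasDerivWithinAt (s := Ioi s))
      rwa [hasDerivWithinAt_iff_tendsto_slope' (notMem_Ioi.2 le_rfl)] at this
    have h2 : Tendsto (fun z => slope δu s z - v) (nhdsWithin s (Ioi s)) (nhds 0) := by
      simpa using h1.sub (tendsto_const_nhds (x := v))
    simpa [slope_def_module] using h2.norm
  have key : Tendsto (fun z => slope (fun z => ‖δu z‖) s z
        - (‖δu s + (z - s) • v‖ - ‖δu s‖) / (z - s))
      (nhdsWithin s (Ioi s)) (nhds 0) := by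
    apply squeeze_zero_norm' _ hV
    filter_upwards [self_mem_nhdsWithin] with z hz
    have hzs : (0:ℝ) < z - s := sub_pos.2 hz
    have e1 : slope (fun z => ‖δu z‖) s z - (‖δu s + (z - s) • v‖ - ‖δu s‖) / (z - s)
        = (‖δu z‖ - ‖δu s + (z - s) • v‖) / (z - s) := by
      rw [slope_def_field]; rw [div_sub_div_same]; ring_nf
    rw [Real.norm_eq_abs, e1, abs_div, abs_of_pos hzs]
    have e2 : (z - s)⁻¹ • (δu z - δu s) - v
        = (z - s)⁻¹ • (δu z - (δu s + (z - s) • v)) := by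
      simp only [smul_sub, smul_add, smul_smul, inv_mul_cancel₀ hzs.ne', one_smul]
      abel
    rw [e2, norm_smul, Real.norm_eq_abs, abs_of_pos (inv_pos.2 hzs), inv_mul_eq_div]
    gcongr
    exact abs_norm_sub_norm_le _ _
  have := hA.add key
  rw [add_zero] at this
  convert this using 2 with z
  ring

/-- Key lemma: exponential bound on an interval where `‖δu‖` never vanishes. -/
lemma key_growth {V : Type*} [NormedAddCommGroup V] [NormedSpace ℝ V]
    {t₀ a b : ℝ} {δu δu' : ℝ → V} {lam : ℝ → ℝ}
    (hta : t₀ ≤ a) (hab : a ≤ b)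
    (hderiv : ∀ t, t₀ ≤ t → HasDerivAt δu (δu' t) t)
    (hsip : ∀ t, t₀ ≤ t → ∃ L : ℝ,
      Tendsto (fun h : ℝ => (‖δu t + h • δu' t‖ - ‖δu t‖) / h)
        (nhdsWithin 0 (Set.Ioi 0)) (nhds L) ∧
      ‖δu t‖ * L ≤ lam t * ‖δu t‖ ^ 2)
    (hpos : ∀ s ∈ Icc a b, 0 < ‖δu s‖)
    (hintab : IntegrableOn lam (Icc a b)) :
    ‖δu b‖ ≤ Real.exp (∫ s in a..b, lam s) * ‖δu a‖ := by
  have hGcont : ContinuousOn (fun s => Real.log ‖δu s‖) (Icc a b) := by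
    intro s hs
    exact (((hderiv s (hta.trans hs.1)).continuousAt.norm).log
      (hpos s hs).ne').continuousWithinAt
  have hD : ∀ s ∈ Ioo a b, ∃ D : ℝ,
      HasDerivWithinAt (fun z => Real.log ‖δu z‖) D (Ioi s) s ∧ D ≤ lam s := by
    intro s hs
    have hts : t₀ ≤ s := hta.trans hs.1.le
    obtain ⟨L, hL, hLle⟩ := hsip s hts
    have hnorm : HasDerivWithinAt (fun z => ‖δu z‖) L (Ioi s) s :=
      norm_hasDerivWithinAt_of_sip (hderiv s hts) hL
    have hpos' : 0 < ‖δu s‖ := hpos s (Ioo_subset_Icc_self hs)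
    refine ⟨(‖δu s‖)⁻¹ * L, ?_, ?_⟩
    · exact (Real.hasDerivAt_log hpos'.ne').comp_hasDerivWithinAt s hnorm
    · rw [inv_mul_le_iff₀ hpos']
      nlinarith [hpos', hLle]
  classical
  set D : ℝ → ℝ := fun s => if h : s ∈ Ioo a b then (hD s h).choose else 0 with hDdef
  have hsub : Real.log ‖δu b‖ - Real.log ‖δu a‖ ≤ ∫ s in a..b, lam s := by
    refine intervalIntegral.sub_le_integral_of_hasDeriv_right_of_le hab hGcont
      (g' := D) ?_ hintab ?_
    · intro x hx
      rw [hDdef]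
      simp only [dif_pos hx]
      exact (hD x hx).choose_spec.1
    · intro x hx
      rw [hDdef]
      simp only [dif_pos hx]
      exact (hD x hx).choose_spec.2
  have h1 : Real.log ‖δu b‖ ≤ (∫ s in a..b, lam s) + Real.log ‖δu a‖ := by linarith
  calc ‖δu b‖ = Real.exp (Real.log ‖δu b‖) := (Real.exp_log (hpos b ⟨hab, le_rfl⟩)).symm
    _ ≤ Real.exp ((∫ s in a..b, lam s) + Real.log ‖δu a‖) := Real.exp_le_exp.2 h1
    _ = Real.exp (∫ s in a..b, lam s) * ‖δu a‖ := by
        rw [Real.exp_add, Real.exp_log (hpos a ⟨le_rfl, hab⟩)]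


/-- Growth of perturbations: if the semi-inner product `[δu(t), δu'(t)]` is bounded by
`λ(t) ‖δu(t)‖²`, then `‖δu(t)‖ ≤ exp (∫_{t₀}^t λ) ‖δu(t₀)‖`. -/
theorem growth_bound {V : Type*} [NormedAddCommGroup V] [NormedSpace ℝ V]
    (t₀ : ℝ) (δu δu' : ℝ → V) (lam : ℝ → ℝ)
    (hderiv : ∀ t, t₀ ≤ t → HasDerivAt δu (δu' t) t)
    (hint : ∀ t, t₀ ≤ t → IntervalIntegrable lam volume t₀ t)
    (hsip : ∀ t, t₀ ≤ t → ∃ L : ℝ,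
      Tendsto (fun h : ℝ => (‖δu t + h • δu' t‖ - ‖δu t‖) / h)
        (nhdsWithin 0 (Set.Ioi 0)) (nhds L) ∧
      ‖δu t‖ * L ≤ lam t * ‖δu t‖ ^ 2) :
    ∀ t, t₀ ≤ t → ‖δu t‖ ≤ Real.exp (∫ s in t₀..t, lam s) * ‖δu t₀‖ := by
  intro t ht
  -- integrability on all subintervals of `[t₀, t]`
  have hInt : ∀ a b : ℝ, t₀ ≤ a → a ≤ b → b ≤ t → IntegrableOn lam (Icc a b) := by
    intro a b ha hab hbt
    rw [← intervalIntegrable_iff_integrableOn_Icc_of_le hab]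
    exact (hint t ht).mono_set (by
      rw [uIcc_of_le hab, uIcc_of_le ht]
      exact Icc_subset_Icc ha hbt)
  by_cases hzero : ‖δu t‖ = 0
  · rw [hzero]; positivity
  have hpos_t : 0 < ‖δu t‖ := (norm_nonneg _).lt_of_ne' hzero
  have hpos_all : ∀ s ∈ Icc t₀ t, 0 < ‖δu s‖ := by
    by_contra hcon
    push_neg at hcon
    obtain ⟨s₀, hs₀, hs₀0⟩ := hcon
    have hs₀0' : ‖δu s₀‖ = 0 := le_antisymm hs₀0 (norm_nonneg _)
    set A : Set ℝ := Icc t₀ t ∩ (fun s => ‖δu s‖) ⁻¹' {0} with hA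
    have hδucont : ContinuousOn (fun s => ‖δu s‖) (Icc t₀ t) := fun s hs =>
      ((hderiv s hs.1).continuousAt.norm).continuousWithinAt
    have hA_closed : IsClosed A :=
      hδucont.preimage_isClosed_of_isClosed isClosed_Icc isClosed_singleton
    have hA_ne : A.Nonempty := ⟨s₀, hs₀, hs₀0'⟩
    have hA_bdd : BddAbove A := bddAbove_Icc.mono inter_subset_left
    set τ : ℝ := sSup A with hτ
    have hτA : τ ∈ A := hA_closed.csSup_mem hA_ne hA_bdd
    have hτ0 : ‖δu τ‖ = 0 := hτA.2
    have hτIcc : τ ∈ Icc t₀ t := hτA.1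
    have hτt : τ < t := lt_of_le_of_ne hτIcc.2 (fun h => hzero (h ▸ hτ0))
    -- positivity on `(τ, t]`
    have hposI : ∀ s ∈ Ioc τ t, 0 < ‖δu s‖ := by
      intro s hs
      rcases ((norm_nonneg (δu s)).lt_or_eq) with h | h
      · exact h
      · exact absurd (le_csSup hA_bdd ⟨⟨hτIcc.1.trans hs.1.le, hs.2⟩, h.symm⟩)
          (not_le.2 hs.1)
    -- bound on the primitive
    have hFcont : ContinuousOn (fun s => ∫ r in s..t, lam r) (Icc τ t) := by
      have := intervalIntegral.continuousOn_primitive_interval_left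
        (f := lam) (μ := volume) (a := τ) (b := t)
        (by rw [uIcc_of_le hτt.le]; exact hInt τ t hτIcc.1 hτt.le le_rfl)
      rwa [uIcc_of_le hτt.le] at this
    obtain ⟨C, hC⟩ := isCompact_Icc.exists_bound_of_continuousOn hFcont
    -- pick `s` close to `τ` with `‖δu s‖` tiny
    have htend : Tendsto (fun s => ‖δu s‖) (nhdsWithin τ (Ioi τ)) (nhds 0) := by
      have := ((hderiv τ hτIcc.1).continuousAt.norm)
      rw [ContinuousAt, hτ0] at this
      exact this.mono_left nhdsWithin_le_nhds
    have hsmall : ∀ᶠ s in nhdsWithin τ (Ioi τ),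
        ‖δu s‖ < Real.exp (-C) * ‖δu t‖ := by
      have hpos' : 0 < Real.exp (-C) * ‖δu t‖ := by positivity
      exact htend (by simpa using Iio_mem_nhds hpos' : Iio (Real.exp (-C) * ‖δu t‖) ∈ nhds 0)
    obtain ⟨s, hs_small, hs_Ioc⟩ :=
      (hsmall.and (Ioc_mem_nhdsGT_of_mem (⟨le_rfl, hτt⟩ : τ ∈ Set.Ico τ t))).exists
    -- apply the key lemma on `[s, t]`
    have hkey := key_growth (hτIcc.1.trans hs_Ioc.1.le) hs_Ioc.2 hderiv hsip
      (fun r hr => hposI r ⟨hs_Ioc.1.trans_le hr.1, hr.2⟩)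
      (hInt s t (hτIcc.1.trans hs_Ioc.1.le) hs_Ioc.2 le_rfl)
    have hCs : (∫ r in s..t, lam r) ≤ C := by
      have := hC _ (⟨hs_Ioc.1.le, hs_Ioc.2⟩ : s ∈ Icc τ t)
      exact (le_abs_self _).trans ((Real.norm_eq_abs _ ▸ this))
    have : ‖δu t‖ < ‖δu t‖ := by
      calc ‖δu t‖ ≤ Real.exp (∫ r in s..t, lam r) * ‖δu s‖ := hkey
        _ ≤ Real.exp C * ‖δu s‖ := mul_le_mul_of_nonneg_right (Real.exp_le_exp.2 hCs) (norm_nonneg _)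
        _ < Real.exp C * (Real.exp (-C) * ‖δu t‖) := by
            have : 0 < Real.exp C := Real.exp_pos C
            nlinarith [hposI s hs_Ioc, hs_small]
        _ = ‖δu t‖ := by rw [← mul_assoc, ← Real.exp_add, add_neg_cancel, Real.exp_zero, one_mul]
    exact lt_irrefl _ this
  exact key_growth le_rfl ht hderiv hsip hpos_all (hInt t₀ t le_rfl ht le_rfl)
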